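/- If f : 2^[n] → ℝ is submodular with f(∅) = 0, then the minimum of f over all subsets of [n] equals the minimum of its Lovász extension f^L over the hypercube [0,1]^n: min_{S ⊆ [n]} f(S) = min_{x ∈ [0,1]^n} f^L(x). -/
import Mathlib


open Finset

/-- The Lovász extension of a set function `f : 2^[n] → ℝ` (with `f ∅ = 0`):
order the coordinates of `x` decreasingly via a permutation `σ` (obtained by sorting
`-x` increasingly), and set
`f^L(x) = ∑ₖ x(σ k) * (f {σ 0, …, σ k} − f {σ 0, …, σ (k-1)})`. -/
noncomputable def lovasz {n : ℕ} (f : Finset (Fin n) → ℝ) (x : Fin n → ℝ) : ℝ :=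
  ∑ k : Fin n,
    x (Tuple.sort (fun i => -x i) k) *
      (f ((Finset.univ.filter (fun j : Fin n => j ≤ k)).image (Tuple.sort (fun i => -x i)))
        - f ((Finset.univ.filter (fun j : Fin n => j < k)).image (Tuple.sort (fun i => -x i))))

namespace StmtAux

variable {n : ℕ}

/-- The set `{σ 0, …, σ (c-1)}`. -/
def G (σ : Equiv.Perm (Fin n)) (c : ℕ) : Finset (Fin n) :=
  (Finset.univ.filter (fun j : Fin n => (j : ℕ) < c)).image σ

/-- The sequence `x (σ 0), x (σ 1), …` extended by zero. -/
noncomputable def A (x : Fin n → ℝ) (σ : Equiv.Perm (Fin n)) (k : ℕ) : ℝ :=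
  if h : k < n then x (σ ⟨k, h⟩) else 0

lemma G_zero (σ : Equiv.Perm (Fin n)) : G σ 0 = ∅ := by
  simp [G]

lemma lovasz_eq (f : Finset (Fin n) → ℝ) (x : Fin n → ℝ) :
    lovasz f x = ∑ k ∈ Finset.range n,
      A x (Tuple.sort (fun i => -x i)) k *
        (f (G (Tuple.sort (fun i => -x i)) (k + 1)) -
          f (G (Tuple.sort (fun i => -x i)) k)) := by
  set σ := Tuple.sort (fun i => -x i) with hσ
  rw [lovasz, ← Fin.sum_univ_eq_sum_range
    (fun k => A x σ k * (f (G σ (k + 1)) - f (G σ k))) n]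
  refine Finset.sum_congr rfl fun k _ => ?_
  have hA : A x σ (k : ℕ) = x (σ k) := by simp [A, k.isLt]
  have h1 : G σ ((k : ℕ) + 1) = (Finset.univ.filter (fun j : Fin n => j ≤ k)).image σ := by
    unfold G
    congr 1
    ext j
    simp only [Finset.mem_filter, Finset.mem_univ, true_and, Fin.le_def, Nat.lt_succ_iff]
  have h2 : G σ (k : ℕ) = (Finset.univ.filter (fun j : Fin n => j < k)).image σ := by
    unfold G
    congr 1
  rw [hA, h1, h2]

lemma abel (a b : ℕ → ℝ) (n : ℕ) (ha : a n = 0) (hb : b 0 = 0) :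
    ∑ k ∈ Finset.range n, a k * (b (k + 1) - b k)
      = ∑ k ∈ Finset.range n, (a k - a (k + 1)) * b (k + 1) := by
  have h : ∑ k ∈ Finset.range n, a (k + 1) * b (k + 1)
      = ∑ k ∈ Finset.range n, a k * b k := by
    have h1 := Finset.sum_range_succ' (fun k => a k * b k) n
    have h2 := Finset.sum_range_succ (fun k => a k * b k) n
    rw [h2] at h1
    simp only [ha, hb, zero_mul, mul_zero, add_zero] at h1
    linarith
  simp only [mul_sub, sub_mul]
  rw [Finset.sum_sub_distrib, Finset.sum_sub_distrib, h]

lemma lovasz_indicator (f : Finset (Fin n) → ℝ) (hf : f ∅ = 0) (S : Finset (Fin n)) :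
    lovasz f (fun i => if i ∈ S then (1 : ℝ) else 0) = f S := by
  classical
  set x : Fin n → ℝ := fun i => if i ∈ S then (1 : ℝ) else 0 with hx
  set σ := Tuple.sort (fun i => -x i) with hσ
  have hmono : Monotone ((fun i => -x i) ∘ σ) := Tuple.monotone_sort (fun i => -x i)
  set U : Finset (Fin n) := Finset.univ.filter (fun k : Fin n => σ k ∈ S) with hU
  -- U is a lower set
  have hlow : ∀ k k' : Fin n, k' ≤ k → σ k ∈ S → σ k' ∈ S := by
    intro k k' hle hk
    have h := hmono hle
    simp only [Function.comp, hx] at h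
    by_contra hk'
    simp [hk, hk'] at h
    linarith
  have hcardU : U.card = S.card := by
    have himg : U.image σ = S := by
      ext j
      simp only [hU, Finset.mem_image, Finset.mem_filter, Finset.mem_univ, true_and]
      constructor
      · rintro ⟨k, hk, rfl⟩; exact hk
      · intro hj; exact ⟨σ.symm j, by simpa using hj, by simp⟩
    rw [← himg, Finset.card_image_of_injective _ σ.injective]
  have hmem : ∀ k : Fin n, σ k ∈ S ↔ (k : ℕ) < S.card := by
    intro k
    rw [← hcardU]
    constructor
    · intro hk
      have hsub : Finset.Iic k ⊆ U := by
        intro k' hk'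
        simp only [Finset.mem_Iic] at hk'
        simp only [hU, Finset.mem_filter, Finset.mem_univ, true_and]
        exact hlow k k' hk' hk
      have := Finset.card_le_card hsub
      rw [Fin.card_Iic] at this
      omega
    · intro hk
      by_contra hkn
      have hsub : U ⊆ Finset.Iio k := by
        intro u hu
        simp only [hU, Finset.mem_filter, Finset.mem_univ, true_and] at hu
        simp only [Finset.mem_Iio]
        by_contra hle
        exact hkn (hlow u k (le_of_not_gt hle) hu)
      have := Finset.card_le_card hsub
      rw [Fin.card_Iio] at this
      omega
  have hA : ∀ k : ℕ, A x σ k = if k < S.card then (1 : ℝ) else 0 := by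
    intro k
    unfold A
    split
    · next h =>
      have := hmem ⟨k, h⟩
      by_cases hc : k < S.card
      · simp [hx, this.mpr hc, hc]
      · have : σ ⟨k, h⟩ ∉ S := fun hs => hc (this.mp hs)
        simp [hx, this, hc]
    · next h =>
      have : S.card ≤ n := by simpa using Finset.card_le_card (Finset.subset_univ S)
      rw [if_neg (by omega)]
  have hG : G σ S.card = S := by
    ext j
    simp only [G, Finset.mem_image, Finset.mem_filter, Finset.mem_univ, true_and]
    constructor
    · rintro ⟨i, hi, rfl⟩; exact (hmem i).mpr hi
    · intro hj
      refine ⟨σ.symm j, ?_, by simp⟩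
      have := (hmem (σ.symm j)).mp (by simpa using hj)
      exact this
  rw [lovasz_eq, ← hσ]
  have hcle : S.card ≤ n := by simpa using Finset.card_le_card (Finset.subset_univ S)
  have hfilter : (Finset.range n).filter (fun k => k < S.card) = Finset.range S.card := by
    ext k; simp; omega
  calc ∑ k ∈ Finset.range n, A x σ k * (f (G σ (k + 1)) - f (G σ k))
      = ∑ k ∈ Finset.range n,
          (if k < S.card then f (G σ (k + 1)) - f (G σ k) else 0) := by
        refine Finset.sum_congr rfl fun k _ => ?_
        rw [hA k]; split <;> simp
    _ = ∑ k ∈ (Finset.range n).filter (fun k => k < S.card),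
          (f (G σ (k + 1)) - f (G σ k)) := by rw [Finset.sum_filter]
    _ = ∑ k ∈ Finset.range S.card, (f (G σ (k + 1)) - f (G σ k)) := by rw [hfilter]
    _ = f (G σ S.card) - f (G σ 0) := Finset.sum_range_sub (fun k => f (G σ k)) S.card
    _ = f S := by rw [hG, G_zero, hf, sub_zero]

lemma lovasz_ge (f : Finset (Fin n) → ℝ) (hf : f ∅ = 0) (m : ℝ)
    (hm : ∀ T : Finset (Fin n), m ≤ f T) (x : Fin n → ℝ)
    (hx : x ∈ Set.Icc (0 : Fin n → ℝ) 1) : m ≤ lovasz f x := by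
  obtain ⟨hx0, hx1⟩ := hx
  set σ := Tuple.sort (fun i => -x i) with hσ
  have hmono : Monotone ((fun i => -x i) ∘ σ) := Tuple.monotone_sort (fun i => -x i)
  have hAn : A x σ n = 0 := by simp [A]
  have hB0 : f (G σ 0) = 0 := by rw [G_zero, hf]
  rw [lovasz_eq, ← hσ, abel (A x σ) (fun k => f (G σ k)) n hAn hB0]
  have hm0 : m ≤ 0 := hf ▸ hm ∅
  have hcoeff : ∀ k : ℕ, 0 ≤ A x σ k - A x σ (k + 1) := by
    intro k
    unfold A
    split
    · next h =>
      split
      · next h' =>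
        have hle : (⟨k, h⟩ : Fin n) ≤ ⟨k + 1, h'⟩ := by simp [Fin.le_def]
        have := hmono hle
        simp only [Function.comp] at this
        linarith
      · have := hx0 (σ ⟨k, h⟩)
        simp only [Pi.zero_apply] at this
        linarith
    · next h =>
      rw [dif_neg (by omega)]
      simp
  have hsum : ∑ k ∈ Finset.range n, (A x σ k - A x σ (k + 1)) = A x σ 0 := by
    rw [Finset.sum_range_sub' (A x σ) n, hAn, sub_zero]
  have hA0 : A x σ 0 ≤ 1 := by
    unfold A
    split
    · next h =>
      have := hx1 (σ ⟨0, h⟩)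
      simpa using this
    · norm_num
  calc m = 1 * m := (one_mul m).symm
    _ ≤ A x σ 0 * m + (1 - A x σ 0) * 0 := by nlinarith
    _ = A x σ 0 * m := by ring
    _ = (∑ k ∈ Finset.range n, (A x σ k - A x σ (k + 1))) * m := by rw [hsum]
    _ = ∑ k ∈ Finset.range n, (A x σ k - A x σ (k + 1)) * m := by
        rw [Finset.sum_mul]
    _ ≤ ∑ k ∈ Finset.range n, (A x σ k - A x σ (k + 1)) * f (G σ (k + 1)) := by
        refine Finset.sum_le_sum fun k _ => ?_
        exact mul_le_mul_of_nonneg_left (hm _) (hcoeff k)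

end StmtAux

/-- for submodular f with f ∅ = 0,
min over subsets equals min of the Lovász extension over the hypercube [0,1]ⁿ. -/
theorem stmt4 {n : ℕ} (f : Finset (Fin n) → ℝ) (hf : f ∅ = 0)
    (hsub : ∀ S T : Finset (Fin n), f (S ∩ T) + f (S ∪ T) ≤ f S + f T) :
    sInf (Set.range f) = sInf (lovasz f '' Set.Icc (0 : Fin n → ℝ) 1) := by
  classical
  have hIne : (Finset.univ.image f).Nonempty := by
    simp [Finset.image_nonempty]
  set m := (Finset.univ.image f).min' hIne with hmdef
  obtain ⟨S₀, _, hS₀⟩ := Finset.mem_image.mp ((Finset.univ.image f).min'_mem hIne)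
  have hml : ∀ T : Finset (Fin n), m ≤ f T := fun T =>
    (Finset.univ.image f).min'_le (f T) (Finset.mem_image_of_mem f (Finset.mem_univ T))
  have hrange : Set.range f = ↑(Finset.univ.image f) := by
    rw [← Set.image_univ, ← Finset.coe_univ, Finset.coe_image]
  have hL : sInf (Set.range f) = m := by
    rw [hrange, hIne.csInf_eq_min']
  set x₀ : Fin n → ℝ := fun i => if i ∈ S₀ then (1 : ℝ) else 0 with hx₀
  have hx₀mem : x₀ ∈ Set.Icc (0 : Fin n → ℝ) 1 := by
    constructor <;> intro i <;> simp only [hx₀, Pi.zero_apply, Pi.one_apply] <;>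
      split <;> norm_num
  have hx₀val : lovasz f x₀ = m := by
    rw [hx₀, StmtAux.lovasz_indicator f hf S₀, hS₀]
  have hmemA : m ∈ lovasz f '' Set.Icc (0 : Fin n → ℝ) 1 := ⟨x₀, hx₀mem, hx₀val⟩
  have hbdd : BddBelow (lovasz f '' Set.Icc (0 : Fin n → ℝ) 1) := by
    refine ⟨m, ?_⟩
    rintro y ⟨x, hx, rfl⟩
    exact StmtAux.lovasz_ge f hf m hml x hx
  rw [hL]
  refine le_antisymm (le_csInf ⟨m, hmemA⟩ ?_) (csInf_le hbdd hmemA)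
  rintro y ⟨x, hx, rfl⟩
  exact StmtAux.lovasz_ge f hf m hml x hx
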